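/- Let ∇ be a torsion-free affine connection on ℝⁿ given by smooth Christoffel symbols Γᵏᵢⱼ, let φᵢⱼ = φⱼᵢ : ℝⁿ → ℝ be smooth, and let g_{∇,φ} be the twisted Riemannian extension on ℝ²ⁿ. Then at every point of ℝ²ⁿ the Ricci operator of g_{∇,φ} (the endomorphism obtained by raising one index of the Ricci tensor with the metric) is nilpotent; consequently g_{∇,φ} is Einstein if and only if it is Ricci flat. -/

import Mathlib

open scoped BigOperators

noncomputable section

variable {ι : Type} [Fintype ι] [DecidableEq ι]

/-- Partial derivative in the `i`-th coordinate direction. -/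
def pd (i : ι) (f : (ι → ℝ) → ℝ) : (ι → ℝ) → ℝ :=
  fun p => fderiv ℝ f p (Pi.single i 1)

/-- Curvature components `R^l_{ijk}` of the torsion-free connection with Christoffel
symbols `Γ k i j = Γᵏᵢⱼ`:
`Rˡᵢⱼₖ = ∂ᵢΓˡⱼₖ − ∂ⱼΓˡᵢₖ + Σₘ (Γˡᵢₘ Γᵐⱼₖ − Γˡⱼₘ Γᵐᵢₖ)`. -/
def curv (Γ : ι → ι → ι → (ι → ℝ) → ℝ) (l i j k : ι) : (ι → ℝ) → ℝ :=
  fun p => pd i (Γ l j k) p - pd j (Γ l i k) p +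
    ∑ m, (Γ l i m p * Γ m j k p - Γ l j m p * Γ m i k p)

/-- Components `(∇ₕR)ˡᵢⱼₖ` of the covariant derivative of the curvature. -/
def covR (Γ : ι → ι → ι → (ι → ℝ) → ℝ) (h l i j k : ι) : (ι → ℝ) → ℝ :=
  fun p => pd h (curv Γ l i j k) p +
    ∑ m, (Γ l h m p * curv Γ m i j k p - Γ m h i p * curv Γ l m j k p
      - Γ m h j p * curv Γ l i m k p - Γ m h k p * curv Γ l i j m p)

/-- The Szabó operator `S(X) : Y ↦ (∇_X R)(Y,X)X` at the point `p`, as a matrix: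
`(S(X)Y)ˡ = Σ_{h,i,j,k} Xʰ Yⁱ Xʲ Xᵏ (∇ₕR)ˡᵢⱼₖ`. -/
def szabo (Γ : ι → ι → ι → (ι → ℝ) → ℝ) (p X : ι → ℝ) : Matrix ι ι ℝ :=
  Matrix.of fun l i => ∑ h, ∑ j, ∑ k, X h * X j * X k * covR Γ h l i j k p

/-- Ricci tensor `Ricⱼₖ = Σᵢ Rⁱᵢⱼₖ`. -/
def ricci (Γ : ι → ι → ι → (ι → ℝ) → ℝ) (j k : ι) : (ι → ℝ) → ℝ :=
  fun p => ∑ i, curv Γ i i j k p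

/-- Covariant derivative of the Ricci tensor,
`(∇ᵢRic)ⱼₖ = ∂ᵢRicⱼₖ − Σₘ (Γᵐᵢⱼ Ricₘₖ + Γᵐᵢₖ Ricⱼₘ)`. -/
def covRic (Γ : ι → ι → ι → (ι → ℝ) → ℝ) (i j k : ι) : (ι → ℝ) → ℝ :=
  fun p => pd i (ricci Γ j k) p -
    ∑ m, (Γ m i j p * ricci Γ m k p + Γ m i k p * ricci Γ j m p)

/-- The Ricci tensor is cyclic parallel at `p`. -/
def CyclicParallelAt (Γ : ι → ι → ι → (ι → ℝ) → ℝ) (p : ι → ℝ) : Prop :=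
  ∀ i j k, covRic Γ i j k p + covRic Γ j k i p + covRic Γ k i j p = 0

/-- Christoffel symbols `Γ̃ᶜₐᵦ = ½ Σ_d g̃ᶜᵈ (∂ₐ g̃ᵦ_d + ∂ᵦ g̃ₐ_d − ∂_d g̃ₐᵦ)` of the
Levi-Civita connection of a pseudo-Riemannian metric `g`. -/
def christoffel (g : (ι → ℝ) → Matrix ι ι ℝ) (c a b : ι) : (ι → ℝ) → ℝ :=
  fun p => (1 / 2) * ∑ d, (g p)⁻¹ c d *
    (pd a (fun q => g q b d) p + pd b (fun q => g q a d) p - pd d (fun q => g q a b) p)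

end

/-- The twisted Riemannian extension `g_{∇,φ}` on `ℝ²ⁿ = (Fin n ⊕ Fin n) → ℝ`:
`g_{ij} = φᵢⱼ − 2 Σₖ u_{k'} Γᵏᵢⱼ`, `g_{ij'} = g_{j'i} = δᵢⱼ`, `g_{i'j'} = 0`, where the base
coordinates are indexed by `Sum.inl` and the fiber coordinates by `Sum.inr`. -/
def gTwist {n : ℕ} (Γ : Fin n → Fin n → Fin n → (Fin n → ℝ) → ℝ)
    (φ : Fin n → Fin n → (Fin n → ℝ) → ℝ) :
    ((Fin n ⊕ Fin n) → ℝ) → Matrix (Fin n ⊕ Fin n) (Fin n ⊕ Fin n) ℝ :=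
  fun u => Matrix.of fun a b =>
    match a, b with
    | Sum.inl i, Sum.inl j =>
        φ i j (u ∘ Sum.inl) - 2 * ∑ k, u (Sum.inr k) * Γ k i j (u ∘ Sum.inl)
    | Sum.inl i, Sum.inr j => if i = j then 1 else 0
    | Sum.inr i, Sum.inl j => if i = j then 1 else 0
    | Sum.inr _, Sum.inr _ => 0


noncomputable section

variable {ι : Type} [Fintype ι] [DecidableEq ι]

theorem pd_const (i : ι) (c : ℝ) (p : ι → ℝ) : pd i (fun _ => c) p = 0 := by
  unfold pd; simp

theorem pd_neg (i : ι) (f : (ι → ℝ) → ℝ) (p : ι → ℝ) :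
    pd i (fun x => -f x) p = -pd i f p := by
  unfold pd; rw [fderiv_fun_neg]; simp

theorem pd_sub {f g : (ι → ℝ) → ℝ} {p : ι → ℝ} (hf : DifferentiableAt ℝ f p)
    (hg : DifferentiableAt ℝ g p) (i : ι) :
    pd i (fun x => f x - g x) p = pd i f p - pd i g p := by
  unfold pd; rw [fderiv_fun_sub hf hg]; simp

theorem pd_const_mul {f : (ι → ℝ) → ℝ} {p : ι → ℝ} (hf : DifferentiableAt ℝ f p) (c : ℝ) (i : ι) :
    pd i (fun x => c * f x) p = c * pd i f p := by
  unfold pd; rw [fderiv_const_mul hf c]; simp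

theorem pd_mul {f g : (ι → ℝ) → ℝ} {p : ι → ℝ} (hf : DifferentiableAt ℝ f p)
    (hg : DifferentiableAt ℝ g p) (i : ι) :
    pd i (fun x => f x * g x) p = f p * pd i g p + g p * pd i f p := by
  unfold pd; rw [fderiv_fun_mul hf hg]; simp

theorem pd_sum {α : Type} (i : ι) {s : Finset α} {f : α → (ι → ℝ) → ℝ} {p : ι → ℝ}
    (h : ∀ a ∈ s, DifferentiableAt ℝ (f a) p) :
    pd i (fun x => ∑ a ∈ s, f a x) p = ∑ a ∈ s, pd i (f a) p := by
  unfold pd; rw [fderiv_fun_sum h]; simp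

theorem pd_proj (c i : ι) (p : ι → ℝ) :
    pd i (fun u : ι → ℝ => u c) p = if c = i then 1 else 0 := by
  unfold pd
  rw [show (fun u : ι → ℝ => u c) = ⇑(ContinuousLinearMap.proj (R := ℝ) (φ := fun _ : ι => ℝ) c)
    from rfl, ContinuousLinearMap.fderiv]
  simp [Pi.single_apply]

theorem diff_eval (c : ι) (p : ι → ℝ) : DifferentiableAt ℝ (fun u : ι → ℝ => u c) p :=
  (ContinuousLinearMap.proj (R := ℝ) (φ := fun _ : ι => ℝ) c).differentiableAt

end

section Lift

variable {n : ℕ}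

noncomputable def bb (n : ℕ) : ((Fin n ⊕ Fin n) → ℝ) →L[ℝ] (Fin n → ℝ) :=
  ContinuousLinearMap.pi fun i => ContinuousLinearMap.proj (Sum.inl i)

theorem diff_lift {f : (Fin n → ℝ) → ℝ} (hf : ContDiff ℝ (⊤ : ℕ∞) f)
    (p : (Fin n ⊕ Fin n) → ℝ) :
    DifferentiableAt ℝ (fun u : (Fin n ⊕ Fin n) → ℝ => f (u ∘ Sum.inl)) p :=
  ((hf.differentiable (by simp)).differentiableAt).comp p (bb n).differentiableAt

theorem pd_lift_inr {f : (Fin n → ℝ) → ℝ} (hf : ContDiff ℝ (⊤ : ℕ∞) f) (h : Fin n)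
    (p : (Fin n ⊕ Fin n) → ℝ) :
    pd (Sum.inr h) (fun u : (Fin n ⊕ Fin n) → ℝ => f (u ∘ Sum.inl)) p = 0 := by
  unfold pd
  rw [show (fun u : (Fin n ⊕ Fin n) → ℝ => f (u ∘ Sum.inl)) = f ∘ ⇑(bb n) from rfl,
    fderiv_comp p ((hf.differentiable (by simp)).differentiableAt) (bb n).differentiableAt]
  rw [ContinuousLinearMap.coe_comp', Function.comp_apply, ContinuousLinearMap.fderiv]
  have hz : (bb n) (Pi.single (Sum.inr h) (1 : ℝ)) = 0 := by
    funext i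
    simp [bb, Pi.single_apply]
  rw [hz, map_zero]

end Lift

section Twist

variable {n : ℕ} (Γ : Fin n → Fin n → Fin n → (Fin n → ℝ) → ℝ)
  (φ : Fin n → Fin n → (Fin n → ℝ) → ℝ)

theorem gT_ll (u : (Fin n ⊕ Fin n) → ℝ) (i j : Fin n) :
    gTwist Γ φ u (Sum.inl i) (Sum.inl j)
      = φ i j (u ∘ Sum.inl) - 2 * ∑ k, u (Sum.inr k) * Γ k i j (u ∘ Sum.inl) := rfl

theorem gT_lr (u : (Fin n ⊕ Fin n) → ℝ) (i j : Fin n) :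
    gTwist Γ φ u (Sum.inl i) (Sum.inr j) = if i = j then 1 else 0 := rfl

theorem gT_rl (u : (Fin n ⊕ Fin n) → ℝ) (i j : Fin n) :
    gTwist Γ φ u (Sum.inr i) (Sum.inl j) = if i = j then 1 else 0 := rfl

theorem gT_rr (u : (Fin n ⊕ Fin n) → ℝ) (i j : Fin n) :
    gTwist Γ φ u (Sum.inr i) (Sum.inr j) = 0 := rfl

/-- Explicit inverse of the twisted metric. -/
noncomputable def gInv : ((Fin n ⊕ Fin n) → ℝ) → Matrix (Fin n ⊕ Fin n) (Fin n ⊕ Fin n) ℝ :=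
  fun u => Matrix.of fun a b =>
    match a, b with
    | Sum.inl _, Sum.inl _ => 0
    | Sum.inl i, Sum.inr j => if i = j then 1 else 0
    | Sum.inr i, Sum.inl j => if i = j then 1 else 0
    | Sum.inr i, Sum.inr j => -(gTwist Γ φ u (Sum.inl i) (Sum.inl j))

theorem gI_ll (u : (Fin n ⊕ Fin n) → ℝ) (i j : Fin n) :
    gInv Γ φ u (Sum.inl i) (Sum.inl j) = 0 := rfl

theorem gI_lr (u : (Fin n ⊕ Fin n) → ℝ) (i j : Fin n) :
    gInv Γ φ u (Sum.inl i) (Sum.inr j) = if i = j then 1 else 0 := rfl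

theorem gI_rl (u : (Fin n ⊕ Fin n) → ℝ) (i j : Fin n) :
    gInv Γ φ u (Sum.inr i) (Sum.inl j) = if i = j then 1 else 0 := rfl

theorem gI_rr (u : (Fin n ⊕ Fin n) → ℝ) (i j : Fin n) :
    gInv Γ φ u (Sum.inr i) (Sum.inr j) = -(gTwist Γ φ u (Sum.inl i) (Sum.inl j)) := rfl

theorem gTwist_mul_gInv (u : (Fin n ⊕ Fin n) → ℝ) :
    gTwist Γ φ u * gInv Γ φ u = 1 := by
  ext a b
  cases a <;> cases b <;>
    simp [Matrix.mul_apply, Fintype.sum_sum_type, gT_ll, gT_lr, gT_rl, gT_rr,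
      gI_ll, gI_lr, gI_rl, gI_rr, Matrix.one_apply, ite_mul, mul_ite,
      Finset.sum_ite_eq, Finset.sum_ite_eq']

theorem gInv_eq (u : (Fin n ⊕ Fin n) → ℝ) : (gTwist Γ φ u)⁻¹ = gInv Γ φ u :=
  Matrix.inv_eq_right_inv (gTwist_mul_gInv Γ φ u)

theorem diff_A (hs : ∀ k i j, ContDiff ℝ (⊤ : ℕ∞) (Γ k i j))
    (hφs : ∀ i j, ContDiff ℝ (⊤ : ℕ∞) (φ i j)) (i j : Fin n) (u : (Fin n ⊕ Fin n) → ℝ) :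
    DifferentiableAt ℝ (fun q => gTwist Γ φ q (Sum.inl i) (Sum.inl j)) u := by
  refine (diff_lift (hφs i j) u).sub (DifferentiableAt.const_mul ?_ 2)
  exact DifferentiableAt.fun_sum fun k _ => (diff_eval (Sum.inr k) u).mul (diff_lift (hs k i j) u)

theorem pd_A_inr (hs : ∀ k i j, ContDiff ℝ (⊤ : ℕ∞) (Γ k i j))
    (hφs : ∀ i j, ContDiff ℝ (⊤ : ℕ∞) (φ i j)) (h i j : Fin n) (u : (Fin n ⊕ Fin n) → ℝ) :
    pd (Sum.inr h) (fun q => gTwist Γ φ q (Sum.inl i) (Sum.inl j)) u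
      = -(2 * Γ h i j (u ∘ Sum.inl)) := by
  have hsum : DifferentiableAt ℝ
      (fun q : (Fin n ⊕ Fin n) → ℝ => ∑ k, q (Sum.inr k) * Γ k i j (q ∘ Sum.inl)) u :=
    DifferentiableAt.fun_sum fun k _ => (diff_eval (Sum.inr k) u).mul (diff_lift (hs k i j) u)
  have e1 : pd (Sum.inr h) (fun q => gTwist Γ φ q (Sum.inl i) (Sum.inl j)) u
      = pd (Sum.inr h) (fun q : (Fin n ⊕ Fin n) → ℝ => φ i j (q ∘ Sum.inl)) u
        - 2 * pd (Sum.inr h)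
            (fun q : (Fin n ⊕ Fin n) → ℝ => ∑ k, q (Sum.inr k) * Γ k i j (q ∘ Sum.inl)) u := by
    rw [show (fun q => gTwist Γ φ q (Sum.inl i) (Sum.inl j))
        = fun q : (Fin n ⊕ Fin n) → ℝ =>
            (φ i j (q ∘ Sum.inl)) - (2 * ∑ k, q (Sum.inr k) * Γ k i j (q ∘ Sum.inl)) from rfl,
      pd_sub (diff_lift (hφs i j) u) (hsum.const_mul 2), pd_const_mul hsum 2]
  rw [e1, pd_lift_inr (hφs i j),
    pd_sum _ fun k _ => (diff_eval (Sum.inr k) u).fun_mul (diff_lift (hs k i j) u)]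
  have e2 : ∀ k : Fin n,
      pd (Sum.inr h) (fun q : (Fin n ⊕ Fin n) → ℝ => q (Sum.inr k) * Γ k i j (q ∘ Sum.inl)) u
        = (if k = h then 1 else 0) * Γ k i j (u ∘ Sum.inl) := by
    intro k
    rw [pd_mul (diff_eval (Sum.inr k) u) (diff_lift (hs k i j) u),
      pd_lift_inr (hs k i j), pd_proj]
    simp [Sum.inr.injEq]
  simp only [e2]
  simp [ite_mul, Finset.sum_ite_eq']

end Twist

section Chris

variable {n : ℕ} (Γ : Fin n → Fin n → Fin n → (Fin n → ℝ) → ℝ)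
  (φ : Fin n → Fin n → (Fin n → ℝ) → ℝ)
  (hs : ∀ k i j, ContDiff ℝ (⊤ : ℕ∞) (Γ k i j))
  (hφs : ∀ i j, ContDiff ℝ (⊤ : ℕ∞) (φ i j))

-- constant-entry derivative lemmas
theorem pd_g_lr (a : Fin n ⊕ Fin n) (i j : Fin n) (u : (Fin n ⊕ Fin n) → ℝ) :
    pd a (fun q => gTwist Γ φ q (Sum.inl i) (Sum.inr j)) u = 0 := by
  rw [show (fun q => gTwist Γ φ q (Sum.inl i) (Sum.inr j))
    = fun _ : (Fin n ⊕ Fin n) → ℝ => (if i = j then (1:ℝ) else 0) from rfl, pd_const]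

theorem pd_g_rl (a : Fin n ⊕ Fin n) (i j : Fin n) (u : (Fin n ⊕ Fin n) → ℝ) :
    pd a (fun q => gTwist Γ φ q (Sum.inr i) (Sum.inl j)) u = 0 := by
  rw [show (fun q => gTwist Γ φ q (Sum.inr i) (Sum.inl j))
    = fun _ : (Fin n ⊕ Fin n) → ℝ => (if i = j then (1:ℝ) else 0) from rfl, pd_const]

theorem pd_g_rr (a : Fin n ⊕ Fin n) (i j : Fin n) (u : (Fin n ⊕ Fin n) → ℝ) :
    pd a (fun q => gTwist Γ φ q (Sum.inr i) (Sum.inr j)) u = 0 := by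
  rw [show (fun q => gTwist Γ φ q (Sum.inr i) (Sum.inr j))
    = fun _ : (Fin n ⊕ Fin n) → ℝ => (0:ℝ) from rfl, pd_const]

include hs hφs

theorem chris1 (l i j : Fin n) (u : (Fin n ⊕ Fin n) → ℝ) :
    christoffel (gTwist Γ φ) (Sum.inl l) (Sum.inl i) (Sum.inl j) u
      = Γ l i j (u ∘ Sum.inl) := by
  simp only [christoffel, gInv_eq Γ φ u, Fintype.sum_sum_type]
  simp [gI_ll, gI_lr, gI_rl, gI_rr, pd_g_lr, pd_g_rl, pd_g_rr, pd_A_inr Γ φ hs hφs,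
    ite_mul, Finset.sum_ite_eq]

theorem chris2 (l i j : Fin n) (u : (Fin n ⊕ Fin n) → ℝ) :
    christoffel (gTwist Γ φ) (Sum.inl l) (Sum.inl i) (Sum.inr j) u = 0 := by
  simp only [christoffel, gInv_eq Γ φ u, Fintype.sum_sum_type]
  simp [gI_ll, gI_lr, gI_rl, gI_rr, pd_g_lr, pd_g_rl, pd_g_rr, ite_mul, Finset.sum_ite_eq]

theorem chris3 (l i j : Fin n) (u : (Fin n ⊕ Fin n) → ℝ) :
    christoffel (gTwist Γ φ) (Sum.inl l) (Sum.inr i) (Sum.inl j) u = 0 := by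
  simp only [christoffel, gInv_eq Γ φ u, Fintype.sum_sum_type]
  simp [gI_ll, gI_lr, gI_rl, gI_rr, pd_g_lr, pd_g_rl, pd_g_rr, ite_mul, Finset.sum_ite_eq]

theorem chris4 (l i j : Fin n) (u : (Fin n ⊕ Fin n) → ℝ) :
    christoffel (gTwist Γ φ) (Sum.inl l) (Sum.inr i) (Sum.inr j) u = 0 := by
  simp only [christoffel, gInv_eq Γ φ u, Fintype.sum_sum_type]
  simp [gI_ll, gI_lr, gI_rl, gI_rr, pd_g_lr, pd_g_rl, pd_g_rr, ite_mul, Finset.sum_ite_eq]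

theorem chris5 (l i j : Fin n) (u : (Fin n ⊕ Fin n) → ℝ) :
    christoffel (gTwist Γ φ) (Sum.inr l) (Sum.inl i) (Sum.inr j) u
      = -Γ j i l (u ∘ Sum.inl) := by
  simp only [christoffel, gInv_eq Γ φ u, Fintype.sum_sum_type]
  simp [gI_ll, gI_lr, gI_rl, gI_rr, pd_g_lr, pd_g_rl, pd_g_rr, pd_A_inr Γ φ hs hφs,
    ite_mul, Finset.sum_ite_eq]

theorem chris6 (l i j : Fin n) (u : (Fin n ⊕ Fin n) → ℝ) :
    christoffel (gTwist Γ φ) (Sum.inr l) (Sum.inr i) (Sum.inl j) u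
      = -Γ i j l (u ∘ Sum.inl) := by
  simp only [christoffel, gInv_eq Γ φ u, Fintype.sum_sum_type]
  simp [gI_ll, gI_lr, gI_rl, gI_rr, pd_g_lr, pd_g_rl, pd_g_rr, pd_A_inr Γ φ hs hφs,
    ite_mul, Finset.sum_ite_eq]

theorem chris7 (l i j : Fin n) (u : (Fin n ⊕ Fin n) → ℝ) :
    christoffel (gTwist Γ φ) (Sum.inr l) (Sum.inr i) (Sum.inr j) u = 0 := by
  simp only [christoffel, gInv_eq Γ φ u, Fintype.sum_sum_type]
  simp [gI_ll, gI_lr, gI_rl, gI_rr, pd_g_lr, pd_g_rl, pd_g_rr, ite_mul, Finset.sum_ite_eq]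

end Chris

section Ric

variable {n : ℕ} (Γ : Fin n → Fin n → Fin n → (Fin n → ℝ) → ℝ)
  (φ : Fin n → Fin n → (Fin n → ℝ) → ℝ)
  (hs : ∀ k i j, ContDiff ℝ (⊤ : ℕ∞) (Γ k i j))
  (hφs : ∀ i j, ContDiff ℝ (⊤ : ℕ∞) (φ i j))

include hs

theorem pd_Glift_inr (a b c h : Fin n) (u : (Fin n ⊕ Fin n) → ℝ) :
    pd (Sum.inr h) (fun v : (Fin n ⊕ Fin n) → ℝ => Γ a b c (v ∘ Sum.inl)) u = 0 :=
  pd_lift_inr (hs a b c) h u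

theorem pd_negGlift_inr (a b c h : Fin n) (u : (Fin n ⊕ Fin n) → ℝ) :
    pd (Sum.inr h) (fun v : (Fin n ⊕ Fin n) → ℝ => -Γ a b c (v ∘ Sum.inl)) u = 0 := by
  rw [pd_neg, pd_lift_inr (hs a b c)]
  simp

include hφs

theorem chrisF1 (l i j : Fin n) :
    christoffel (gTwist Γ φ) (Sum.inl l) (Sum.inl i) (Sum.inl j)
      = fun u => Γ l i j (u ∘ Sum.inl) := funext fun u => chris1 Γ φ hs hφs l i j u

theorem chrisF2 (l i j : Fin n) :
    christoffel (gTwist Γ φ) (Sum.inl l) (Sum.inl i) (Sum.inr j)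
      = fun _ => 0 := funext fun u => chris2 Γ φ hs hφs l i j u

theorem chrisF3 (l i j : Fin n) :
    christoffel (gTwist Γ φ) (Sum.inl l) (Sum.inr i) (Sum.inl j)
      = fun _ => 0 := funext fun u => chris3 Γ φ hs hφs l i j u

theorem chrisF4 (l i j : Fin n) :
    christoffel (gTwist Γ φ) (Sum.inl l) (Sum.inr i) (Sum.inr j)
      = fun _ => 0 := funext fun u => chris4 Γ φ hs hφs l i j u

theorem chrisF5 (l i j : Fin n) :
    christoffel (gTwist Γ φ) (Sum.inr l) (Sum.inl i) (Sum.inr j)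
      = fun u => -Γ j i l (u ∘ Sum.inl) := funext fun u => chris5 Γ φ hs hφs l i j u

theorem chrisF6 (l i j : Fin n) :
    christoffel (gTwist Γ φ) (Sum.inr l) (Sum.inr i) (Sum.inl j)
      = fun u => -Γ i j l (u ∘ Sum.inl) := funext fun u => chris6 Γ φ hs hφs l i j u

theorem chrisF7 (l i j : Fin n) :
    christoffel (gTwist Γ φ) (Sum.inr l) (Sum.inr i) (Sum.inr j)
      = fun _ => 0 := funext fun u => chris7 Γ φ hs hφs l i j u

theorem ricci_rr (p q : Fin n) (u : (Fin n ⊕ Fin n) → ℝ) :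
    ricci (christoffel (gTwist Γ φ)) (Sum.inr p) (Sum.inr q) u = 0 := by
  simp [ricci, curv, Fintype.sum_sum_type,
    chrisF1 Γ φ hs hφs, chrisF2 Γ φ hs hφs, chrisF3 Γ φ hs hφs, chrisF4 Γ φ hs hφs,
    chrisF5 Γ φ hs hφs, chrisF6 Γ φ hs hφs, chrisF7 Γ φ hs hφs,
    pd_const, pd_Glift_inr Γ hs, pd_negGlift_inr Γ hs]

theorem ricci_rl (p q : Fin n) (u : (Fin n ⊕ Fin n) → ℝ) :
    ricci (christoffel (gTwist Γ φ)) (Sum.inr p) (Sum.inl q) u = 0 := by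
  simp [ricci, curv, Fintype.sum_sum_type,
    chrisF1 Γ φ hs hφs, chrisF2 Γ φ hs hφs, chrisF3 Γ φ hs hφs, chrisF4 Γ φ hs hφs,
    chrisF5 Γ φ hs hφs, chrisF6 Γ φ hs hφs, chrisF7 Γ φ hs hφs,
    pd_const, pd_Glift_inr Γ hs, pd_negGlift_inr Γ hs]

theorem ricci_lr (p q : Fin n) (u : (Fin n ⊕ Fin n) → ℝ) :
    ricci (christoffel (gTwist Γ φ)) (Sum.inl p) (Sum.inr q) u = 0 := by
  simp [ricci, curv, Fintype.sum_sum_type,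
    chrisF1 Γ φ hs hφs, chrisF2 Γ φ hs hφs, chrisF3 Γ φ hs hφs, chrisF4 Γ φ hs hφs,
    chrisF5 Γ φ hs hφs, chrisF6 Γ φ hs hφs, chrisF7 Γ φ hs hφs,
    pd_const, pd_Glift_inr Γ hs, pd_negGlift_inr Γ hs]

end Ric

/-- the Ricci operator of a twisted Riemannian extension `g_{∇,φ}` (obtained
by raising one index of the Ricci tensor of its Levi-Civita connection with the metric) is
nilpotent at every point; consequently `g_{∇,φ}` is Einstein (i.e. `Ric = c · g` for a
constant `c`) if and only if it is Ricci flat. -/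
theorem stmt_16 (n : ℕ) (Γ : Fin n → Fin n → Fin n → (Fin n → ℝ) → ℝ)
    (hsmooth : ∀ k i j, ContDiff ℝ (⊤ : ℕ∞) (Γ k i j))
    (hsym : ∀ k i j, Γ k i j = Γ k j i)
    (φ : Fin n → Fin n → (Fin n → ℝ) → ℝ)
    (hφsmooth : ∀ i j, ContDiff ℝ (⊤ : ℕ∞) (φ i j))
    (hφsym : ∀ i j, φ i j = φ j i) :
    (∀ u : (Fin n ⊕ Fin n) → ℝ,
        IsNilpotent (Matrix.of fun a b =>
          ∑ d, (gTwist Γ φ u)⁻¹ a d * ricci (christoffel (gTwist Γ φ)) d b u)) ∧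
      ((∃ c : ℝ, ∀ (u : (Fin n ⊕ Fin n) → ℝ) (a b : Fin n ⊕ Fin n),
          ricci (christoffel (gTwist Γ φ)) a b u = c * gTwist Γ φ u a b) ↔
        (∀ (u : (Fin n ⊕ Fin n) → ℝ) (a b : Fin n ⊕ Fin n),
          ricci (christoffel (gTwist Γ φ)) a b u = 0)) := by
  have hfst : ∀ (u : (Fin n ⊕ Fin n) → ℝ) (p : Fin n) (b : Fin n ⊕ Fin n),
      ricci (christoffel (gTwist Γ φ)) (Sum.inr p) b u = 0 := by
    intro u p b
    cases b with
    | inl q => exact ricci_rl Γ φ hsmooth hφsmooth p q u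
    | inr q => exact ricci_rr Γ φ hsmooth hφsmooth p q u
  have hsnd : ∀ (u : (Fin n ⊕ Fin n) → ℝ) (a : Fin n ⊕ Fin n) (q : Fin n),
      ricci (christoffel (gTwist Γ φ)) a (Sum.inr q) u = 0 := by
    intro u a q
    cases a with
    | inl p => exact ricci_lr Γ φ hsmooth hφsmooth p q u
    | inr p => exact ricci_rr Γ φ hsmooth hφsmooth p q u
  constructor
  · intro u
    refine ⟨2, ?_⟩
    ext a b
    simp only [pow_two, Matrix.mul_apply, Matrix.zero_apply]
    refine Finset.sum_eq_zero fun c _ => ?_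
    cases c with
    | inl m =>
      have h2 : (Matrix.of fun a b =>
          ∑ d, (gTwist Γ φ u)⁻¹ a d * ricci (christoffel (gTwist Γ φ)) d b u)
            (Sum.inl m) b = 0 := by
        simp only [Matrix.of_apply, gInv_eq Γ φ u, Fintype.sum_sum_type]
        simp [gI_ll, gI_lr, hfst u]
      rw [h2, mul_zero]
    | inr m =>
      have h1 : (Matrix.of fun a b =>
          ∑ d, (gTwist Γ φ u)⁻¹ a d * ricci (christoffel (gTwist Γ φ)) d b u)
            a (Sum.inr m) = 0 := by
        simp only [Matrix.of_apply]
        refine Finset.sum_eq_zero fun d _ => ?_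
        rw [hsnd u d m, mul_zero]
      rw [h1, zero_mul]
  · constructor
    · rintro ⟨c, hc⟩ u a b
      by_cases hn : n = 0
      · subst hn
        cases a with
        | inl i => exact i.elim0
        | inr i => exact i.elim0
      · have i : Fin n := ⟨0, Nat.pos_of_ne_zero hn⟩
        have h0 : c = 0 := by
          have hx := hc u (Sum.inl i) (Sum.inr i)
          rw [hsnd u (Sum.inl i) i] at hx
          simpa [gT_lr Γ φ] using hx.symm
        rw [hc u a b, h0, zero_mul]
    · intro h
      exact ⟨0, fun u a b => by rw [h u a b, zero_mul]⟩
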